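/- Let F : ℝ ⇝ ℝ be the set-valued map defined by F(x) = {x·sin(1/x)} for x ≠ 0 and F(0) = {0}. Then the upper derivative set of F at (0,0) in the direction 1 is the full interval: ∂^U F(0,0)/∂1 = [-1, 1]; that is, u ∈ ℝ satisfies liminf_{δ→0+} (1/δ) d(δu, F(δ)) = 0 if and only if −1 ≤ u ≤ 1. -/

import Mathlib

open Filter Metric Set Topology

/-- Upper contingent cone `T^U_K(x)`. -/
noncomputable def upperContingentCone {X : Type*} [NormedAddCommGroup X] [NormedSpace ℝ X]
    (K : Set X) (x : X) : Set X :=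
  {u : X | liminf (fun δ : ℝ => (1 / δ) * infDist (x + δ • u) K) (𝓝[>] 0) = 0}

/-- Lower contingent cone `T^L_K(x)`. -/
noncomputable def lowerContingentCone {X : Type*} [NormedAddCommGroup X] [NormedSpace ℝ X]
    (K : Set X) (x : X) : Set X :=
  {u : X | Tendsto (fun δ : ℝ => (1 / δ) * infDist (x + δ • u) K) (𝓝[>] 0) (𝓝 0)}

/-- Graph of a set-valued map. -/
def svGraph {X Y : Type*} (F : X → Set Y) : Set (X × Y) := {q : X × Y | q.2 ∈ F q.1}

/-- Upper derivative set `∂^U F(x,y)/∂p`. -/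
noncomputable def upperDerivSet {X Y : Type*} [NormedAddCommGroup X] [NormedSpace ℝ X]
    [NormedAddCommGroup Y] [NormedSpace ℝ Y] (F : X → Set Y) (x : X) (y : Y) (p : X) : Set Y :=
  {u : Y | liminf (fun δ : ℝ => (1 / δ) * infDist (y + δ • u) (F (x + δ • p))) (𝓝[>] 0) = 0}

/-- Lower derivative set `∂^L F(x,y)/∂p`. -/
noncomputable def lowerDerivSet {X Y : Type*} [NormedAddCommGroup X] [NormedSpace ℝ X]
    [NormedAddCommGroup Y] [NormedSpace ℝ Y] (F : X → Set Y) (x : X) (y : Y) (p : X) : Set Y :=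
  {u : Y | Tendsto (fun δ : ℝ => (1 / δ) * infDist (y + δ • u) (F (x + δ • p))) (𝓝[>] 0) (𝓝 0)}

/-- Hausdorff deviation `h*(E, D) = sup_{e ∈ E} d(e, D)`. -/
noncomputable def hausdorffDev {Y : Type*} [NormedAddCommGroup Y] (E D : Set Y) : ℝ :=
  sSup ((fun e => infDist e D) '' E)

open Classical in
/-- The set-valued map `F(x) = {x · sin(1/x)}` for `x ≠ 0`, `F(0) = {0}`. -/
noncomputable def Fsin : ℝ → Set ℝ := fun x =>
  if x = 0 then {0} else {x * Real.sin (1 / x)}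


lemma fsin_simp (u : ℝ) :
    ∀ᶠ δ in 𝓝[>] (0:ℝ),
      (1 / δ) * infDist ((0:ℝ) + δ • u) (Fsin (0 + δ • 1)) = |u - Real.sin (1 / δ)| := by
  filter_upwards [self_mem_nhdsWithin] with δ (hδ : (0:ℝ) < δ)
  have hδ' : δ ≠ 0 := ne_of_gt hδ
  simp only [zero_add, smul_eq_mul, mul_one, Fsin, if_neg hδ', infDist_singleton,
    Real.dist_eq]
  rw [show δ * u - δ * Real.sin (1/δ) = δ * (u - Real.sin (1/δ)) by ring, abs_mul,
    abs_of_pos hδ]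
  field_simp

lemma bdd_above (u : ℝ) :
    IsBoundedUnder (· ≤ ·) (𝓝[>] (0:ℝ)) (fun δ => |u - Real.sin (1/δ)|) := by
  refine isBoundedUnder_of ⟨|u| + 1, fun δ => ?_⟩
  calc |u - Real.sin (1/δ)| ≤ |u| + |Real.sin (1/δ)| := abs_sub u _
    _ ≤ |u| + 1 := by linarith [Real.abs_sin_le_one (1/δ)]

theorem upperDerivSet_Fsin_eq_Icc :
    upperDerivSet Fsin 0 0 1 = Icc (-1 : ℝ) 1 := by
  ext u
  simp only [upperDerivSet, mem_setOf_eq, mem_Icc]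
  rw [liminf_congr (fsin_simp u)]
  constructor
  · intro h
    by_contra hc
    have habs : 1 < |u| := lt_of_not_ge (fun hle => hc (abs_le.mp hle))
    have hlb : ∀ δ : ℝ, |u| - 1 ≤ |u - Real.sin (1/δ)| := by
      intro δ
      have := Real.abs_sin_le_one (1/δ)
      calc |u| - 1 ≤ |u| - |Real.sin (1/δ)| := by linarith
        _ ≤ |u - Real.sin (1/δ)| := abs_sub_abs_le_abs_sub _ _
    have : |u| - 1 ≤ liminf (fun δ => |u - Real.sin (1/δ)|) (𝓝[>] (0:ℝ)) :=
      le_liminf_of_le ((bdd_above u).isCoboundedUnder_ge) (Eventually.of_forall hlb)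
    rw [h] at this
    linarith
  · rintro ⟨h1, h2⟩
    have harcsin : Real.sin (Real.arcsin u) = u := Real.sin_arcsin h1 h2
    set a := Real.arcsin u with ha
    set s : ℕ → ℝ := fun n => 1 / (a + (n + 1 : ℕ) * (2 * Real.pi)) with hs
    have hpos : ∀ n : ℕ, 0 < a + (n + 1 : ℕ) * (2 * Real.pi) := by
      intro n
      have h1 : (-(Real.pi/2)) ≤ a := Real.neg_pi_div_two_le_arcsin u
      have h2 : (1:ℝ) ≤ (n + 1 : ℕ) := by exact_mod_cast Nat.succ_le_succ (Nat.zero_le n)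
      have hπ := Real.pi_pos
      nlinarith
    have hstend : Tendsto s atTop (𝓝[>] (0:ℝ)) := by
      rw [tendsto_nhdsWithin_iff]
      constructor
      · have h1 : Tendsto (fun n : ℕ => a + (n + 1 : ℕ) * (2 * Real.pi)) atTop atTop := by
          apply tendsto_atTop_add_const_left
          apply Tendsto.atTop_mul_const (by positivity)
          exact tendsto_natCast_atTop_atTop.comp (tendsto_add_atTop_nat 1)
        simpa [hs, one_div, Pi.inv_def] using h1.inv_tendsto_atTop
      · exact Eventually.of_forall fun n => by
          simpa [hs] using one_div_pos.mpr (hpos n)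
    have hval : ∀ n : ℕ, |u - Real.sin (1 / s n)| = 0 := by
      intro n
      have : (1 : ℝ) / s n = a + (n + 1 : ℕ) * (2 * Real.pi) := by
        rw [hs]; field_simp
      rw [this, Real.sin_add_nat_mul_two_pi, harcsin, sub_self, abs_zero]
    have hle : liminf (fun δ => |u - Real.sin (1/δ)|) (𝓝[>] (0:ℝ)) ≤ 0 := by
      apply liminf_le_of_frequently_le
      · exact hstend.frequently (Frequently.of_forall fun n => le_of_eq (hval n))
      · exact isBoundedUnder_of ⟨0, fun δ => abs_nonneg _⟩
    have hge : (0:ℝ) ≤ liminf (fun δ => |u - Real.sin (1/δ)|) (𝓝[>] (0:ℝ)) :=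
      le_liminf_of_le ((bdd_above u).isCoboundedUnder_ge)
        (Eventually.of_forall fun δ => abs_nonneg _)
    linarith
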